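/- Let k be a field of characteristic zero and u_1,…,u_m ∈ ℤ[x]^n. Let R = AddMonoidAlgebra k (ℕ[x]^m × ℤ[x]^n) (the Laurent difference polynomial ring k{y_1,…,y_m, t_1^{±1},…,t_n^{±1}}), let ι : AddMonoidAlgebra k (ℕ[x]^m) → R be the k-algebra inclusion induced by w ↦ (w, 0), and let J ⊆ R be the ideal generated by the elements single(x^k·e_i, 0) 1 − single(0, x^k·u_i) 1 for 1 ≤ i ≤ m and k ∈ ℕ (the difference ideal generated by y_1 − T^{u_1}, …, y_m − T^{u_m}). Then Ideal.comap ι J = ker θ_U, where θ_U is the monomial substitution homomorphism with θ_U(Y^w) = T^{∑_i w_i·u_i}. (Equation (5): I_U = I_{U,T^±} ∩ k{Y}.) -/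

import Mathlib

open Polynomial AddMonoidAlgebra

/-- The additive monoid homomorphism `ℕ[x]^m →+ ℤ[x]^n`, `w ↦ ∑ i, w i • u i`. -/
noncomputable def expMap {m n : ℕ} (u : Fin m → Fin n → Polynomial ℤ) :
    (Fin m → Polynomial ℕ) →+ (Fin n → Polynomial ℤ) where
  toFun w := ∑ i, ((w i).map (Nat.castRingHom ℤ)) • u i
  map_zero' := by simp
  map_add' a b := by
    simp only [Pi.add_apply, Polynomial.map_add, add_smul]
    exact Finset.sum_add_distrib

/-- The monomial substitution homomorphism `θ_U` with `θ_U(Y^w) = T^{∑ i, w i • u i}`. -/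
noncomputable def thetaU (k : Type*) [CommRing k] {m n : ℕ}
    (u : Fin m → Fin n → Polynomial ℤ) :
    AddMonoidAlgebra k (Fin m → Polynomial ℕ) →ₐ[k]
      AddMonoidAlgebra k (Fin n → Polynomial ℤ) :=
  AddMonoidAlgebra.mapDomainAlgHom k k (expMap u)

/-- The inclusion `k{Y} → k{Y, T^±}` induced by `w ↦ (w, 0)`. -/
noncomputable def iotaYT (k : Type*) [CommRing k] {m n : ℕ} :
    AddMonoidAlgebra k (Fin m → Polynomial ℕ) →ₐ[k]
      AddMonoidAlgebra k ((Fin m → Polynomial ℕ) × (Fin n → Polynomial ℤ)) :=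
  AddMonoidAlgebra.mapDomainAlgHom k k
    (AddMonoidHom.inl (Fin m → Polynomial ℕ) (Fin n → Polynomial ℤ))

lemma expMap_pi_single {m n : ℕ} (u : Fin m → Fin n → Polynomial ℤ) (i : Fin m) (j : ℕ) :
    expMap u (Pi.single i ((X : Polynomial ℕ) ^ j)) = ((X : Polynomial ℤ) ^ j) • u i := by
  have h0 : expMap u (Pi.single i ((X : Polynomial ℕ) ^ j))
      = ∑ i', (((Pi.single i ((X : Polynomial ℕ) ^ j) : Fin m → Polynomial ℕ) i').map
          (Nat.castRingHom ℤ)) • u i' := rfl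
  rw [h0, Finset.sum_eq_single i]
  · simp
  · intro b _ hb; simp [Pi.single_eq_of_ne hb]
  · simp

/-- Projection `k{Y,T^±} → k{T^±}` substituting `Y^w ↦ T^{E w}`. -/
noncomputable def phiU (k : Type*) [CommRing k] {m n : ℕ}
    (u : Fin m → Fin n → Polynomial ℤ) :
    AddMonoidAlgebra k ((Fin m → Polynomial ℕ) × (Fin n → Polynomial ℤ)) →ₐ[k]
      AddMonoidAlgebra k (Fin n → Polynomial ℤ) :=
  AddMonoidAlgebra.mapDomainAlgHom k k
    ((expMap u).coprod (AddMonoidHom.id (Fin n → Polynomial ℤ)))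

lemma single_sub_single_mem {k : Type*} [CommRing k] {m n : ℕ}
    (u : Fin m → Fin n → Polynomial ℤ)
    (J : Ideal (AddMonoidAlgebra k ((Fin m → Polynomial ℕ) × (Fin n → Polynomial ℤ))))
    (hgen : ∀ (i : Fin m) (j : ℕ),
      AddMonoidAlgebra.single ((Pi.single i (Polynomial.X ^ j) : Fin m → Polynomial ℕ),
          (0 : Fin n → Polynomial ℤ)) (1 : k) -
        AddMonoidAlgebra.single ((0 : Fin m → Polynomial ℕ),
          ((Polynomial.X : Polynomial ℤ) ^ j) • u i) (1 : k) ∈ J)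
    (w : Fin m → Polynomial ℕ) :
    AddMonoidAlgebra.single (w, (0 : Fin n → Polynomial ℤ)) (1 : k)
      - AddMonoidAlgebra.single ((0 : Fin m → Polynomial ℕ), expMap u w) (1 : k) ∈ J := by
  set S : AddSubmonoid (Fin m → Polynomial ℕ) :=
    { carrier := {w | AddMonoidAlgebra.single (w, (0 : Fin n → Polynomial ℤ)) (1 : k)
        - AddMonoidAlgebra.single ((0 : Fin m → Polynomial ℕ), expMap u w) (1 : k) ∈ J}
      zero_mem' := by simp
      add_mem' := by
        intro a b ha hb
        simp only [Set.mem_setOf_eq] at ha hb ⊢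
        have key : AddMonoidAlgebra.single (a + b, (0 : Fin n → Polynomial ℤ)) (1 : k)
            - AddMonoidAlgebra.single ((0 : Fin m → Polynomial ℕ), expMap u (a + b)) (1 : k)
            = AddMonoidAlgebra.single (a, (0 : Fin n → Polynomial ℤ)) (1 : k) *
                (AddMonoidAlgebra.single (b, (0 : Fin n → Polynomial ℤ)) (1 : k)
                  - AddMonoidAlgebra.single ((0 : Fin m → Polynomial ℕ), expMap u b) (1 : k))
              + (AddMonoidAlgebra.single (a, (0 : Fin n → Polynomial ℤ)) (1 : k)
                  - AddMonoidAlgebra.single ((0 : Fin m → Polynomial ℕ), expMap u a) (1 : k)) *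
                AddMonoidAlgebra.single ((0 : Fin m → Polynomial ℕ), expMap u b) (1 : k) := by
          simp only [mul_sub, sub_mul, AddMonoidAlgebra.single_mul_single, one_mul,
            Prod.mk_add_mk, add_zero, zero_add, map_add]
          ring
        rw [key]
        exact J.add_mem (J.mul_mem_left _ hb) (J.mul_mem_right _ ha) }
  show w ∈ S
  have hgen' : ∀ (i : Fin m) (j : ℕ), Pi.single i ((X : Polynomial ℕ) ^ j) ∈ S := by
    intro i j
    show _ ∈ J
    rw [expMap_pi_single]
    exact hgen i j
  have hsingle : ∀ (i : Fin m) (p : Polynomial ℕ), Pi.single i p ∈ S := by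
    intro i p
    induction p using Polynomial.induction_on' with
    | add p q hp hq =>
      have h1 : (Pi.single i (p + q) : Fin m → Polynomial ℕ) = Pi.single i p + Pi.single i q := by
        ext x
        by_cases hx : x = i
        · subst hx; simp
        · simp [Pi.single_eq_of_ne hx]
      rw [h1]; exact S.add_mem hp hq
    | monomial j a =>
      have h1 : (Polynomial.monomial j a : Polynomial ℕ) = a • (X : Polynomial ℕ) ^ j := by
        rw [Polynomial.smul_X_eq_monomial]
      rw [h1]
      have h2 : (Pi.single i (a • (X : Polynomial ℕ) ^ j) : Fin m → Polynomial ℕ)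
          = a • Pi.single i ((X : Polynomial ℕ) ^ j) := by
        ext x
        by_cases hx : x = i
        · subst hx; simp
        · simp [Pi.single_eq_of_ne hx]
      rw [h2]
      exact AddSubmonoid.nsmul_mem S (hgen' i j) a
  have : w = ∑ i, Pi.single i (w i) := (Finset.univ_sum_single w).symm
  rw [this]
  exact S.sum_mem (fun i _ => hsingle i (w i))

theorem comap_diff_ideal_eq_kernel_thetaU
    (k : Type*) [Field k] [CharZero k] {m n : ℕ}
    (u : Fin m → Fin n → Polynomial ℤ)
    (J : Ideal (AddMonoidAlgebra k ((Fin m → Polynomial ℕ) × (Fin n → Polynomial ℤ))))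
    (hJ : J = Ideal.span {a | ∃ (i : Fin m) (j : ℕ), a =
        AddMonoidAlgebra.single ((Pi.single i (Polynomial.X ^ j) : Fin m → Polynomial ℕ),
            (0 : Fin n → Polynomial ℤ)) (1 : k) -
          AddMonoidAlgebra.single ((0 : Fin m → Polynomial ℕ),
            ((Polynomial.X : Polynomial ℤ) ^ j) • u i) (1 : k)}) :
    Ideal.comap (iotaYT k) J = RingHom.ker (thetaU k u) := by
  have hgen : ∀ (i : Fin m) (j : ℕ),
      AddMonoidAlgebra.single ((Pi.single i (Polynomial.X ^ j) : Fin m → Polynomial ℕ),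
          (0 : Fin n → Polynomial ℤ)) (1 : k) -
        AddMonoidAlgebra.single ((0 : Fin m → Polynomial ℕ),
          ((Polynomial.X : Polynomial ℤ) ^ j) • u i) (1 : k) ∈ J := by
    intro i j
    rw [hJ]
    exact Ideal.subset_span ⟨i, j, rfl⟩
  -- J ⊆ ker (phiU k u)
  have hJker : J ≤ RingHom.ker (phiU k u) := by
    rw [hJ, Ideal.span_le]
    rintro a ⟨i, j, rfl⟩
    simp only [SetLike.mem_coe, RingHom.mem_ker, map_sub]
    rw [phiU]
    simp only [mapDomainAlgHom_apply, AddMonoidAlgebra.mapDomain_single]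
    rw [AddMonoidHom.coprod_apply, AddMonoidHom.coprod_apply]
    simp [expMap_pi_single]
  -- phiU ∘ iotaYT = thetaU
  have hcomp : ∀ f, phiU k u (iotaYT k f) = thetaU k u f := by
    intro f
    rw [phiU, iotaYT, thetaU]
    simp only [mapDomainAlgHom_apply]
    apply AddMonoidAlgebra.coeff_injective
    simp only [AddMonoidAlgebra.coeff_mapDomain]
    rw [← Finsupp.mapDomain_comp]
    congr 1
    funext w
    simp
  apply le_antisymm
  · intro f hf
    rw [RingHom.mem_ker, ← hcomp]
    have : iotaYT k f ∈ J := hf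
    exact hJker this
  · intro f hf
    rw [RingHom.mem_ker] at hf
    show iotaYT k f ∈ J
    have hf' : AddMonoidAlgebra.mapDomain (expMap u) f = 0 := hf
    have key : iotaYT k f = ∑ w ∈ f.coeff.support,
        (AddMonoidAlgebra.single (w, (0 : Fin n → Polynomial ℤ)) (f.coeff w)
          - AddMonoidAlgebra.single ((0 : Fin m → Polynomial ℕ), expMap u w) (f.coeff w)) := by
      rw [Finset.sum_sub_distrib]
      have h1 : iotaYT k f = ∑ w ∈ f.coeff.support,
          AddMonoidAlgebra.single (w, (0 : Fin n → Polynomial ℤ)) (f.coeff w) := by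
        rw [iotaYT]
        simp only [mapDomainAlgHom_apply]
        apply AddMonoidAlgebra.coeff_injective
        simp only [AddMonoidAlgebra.coeff_mapDomain, AddMonoidAlgebra.coeff_sum,
          AddMonoidAlgebra.coeff_single]
        rw [Finsupp.mapDomain]
        rfl
      have h2 : (∑ w ∈ f.coeff.support,
          AddMonoidAlgebra.single ((0 : Fin m → Polynomial ℕ), expMap u w) (f.coeff w))
          = AddMonoidAlgebra.mapDomain
              (AddMonoidHom.inr (Fin m → Polynomial ℕ) (Fin n → Polynomial ℤ))
              (AddMonoidAlgebra.mapDomain (expMap u) f) := by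
        apply AddMonoidAlgebra.coeff_injective
        simp only [AddMonoidAlgebra.coeff_mapDomain, AddMonoidAlgebra.coeff_sum,
          AddMonoidAlgebra.coeff_single]
        rw [← Finsupp.mapDomain_comp, Finsupp.mapDomain]
        rfl
      rw [h1, h2, hf', AddMonoidAlgebra.mapDomain_zero, sub_zero]
    rw [key]
    refine J.sum_mem (fun w _ => ?_)
    have : AddMonoidAlgebra.single (w, (0 : Fin n → Polynomial ℤ)) (f.coeff w)
        - AddMonoidAlgebra.single ((0 : Fin m → Polynomial ℕ), expMap u w) (f.coeff w)
        = AddMonoidAlgebra.single (0, (0 : Fin n → Polynomial ℤ)) (f.coeff w) *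
          (AddMonoidAlgebra.single (w, (0 : Fin n → Polynomial ℤ)) (1 : k)
            - AddMonoidAlgebra.single ((0 : Fin m → Polynomial ℕ), expMap u w) (1 : k)) := by
      simp [mul_sub, AddMonoidAlgebra.single_mul_single]
    rw [this]
    exact J.mul_mem_left _ (single_sub_single_mem u J hgen w)
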